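/- There is no satisfying assignment for the strict constraint X <_m Y (i.e., the constraint is disentailed) if and only if it is not the case that floor(X) <_m ceiling(Y). -/

import Mathlib

namespace MsetPaper

/-- The maximum element of a multiset of naturals (`0` for the empty multiset). -/
def mmax (s : Multiset ℕ) : ℕ := s.sup

/-- The strict multiset order `x <ₘ y` of the paper: either `x` is empty and `y` is not,
or both are nonempty and either `max x < max y`, or the maxima agree and the multisets
with one occurrence of the maximum removed are again strictly ordered. -/
inductive MLt : Multiset ℕ → Multiset ℕ → Prop
  | empty {y : Multiset ℕ} : y ≠ 0 → MLt 0 y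
  | maxLt {x y : Multiset ℕ} : x ≠ 0 → y ≠ 0 → mmax x < mmax y → MLt x y
  | maxEq {x y : Multiset ℕ} : x ≠ 0 → y ≠ 0 → mmax x = mmax y →
      MLt (x.erase (mmax x)) (y.erase (mmax y)) → MLt x y

/-- The (non-strict) multiset order `x ≤ₘ y`. -/
def MLe (x y : Multiset ℕ) : Prop := MLt x y ∨ x = y

/-- The multiset of values taken by a vector. -/
def msetOf {n : ℕ} (x : Fin n → ℕ) : Multiset ℕ := (List.ofFn x : List ℕ)

/-- `(x, y)` is a satisfying assignment for the strict constraint `X <ₘ Y`. -/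
def SatLt {n : ℕ} (DX DY : Fin n → Finset ℕ) (x y : Fin n → ℕ) : Prop :=
  (∀ i, x i ∈ DX i) ∧ (∀ i, y i ∈ DY i) ∧ MLt (msetOf x) (msetOf y)

/-- The value `v` is consistent for the variable `X i` (strict constraint). -/
def ConsXLt {n : ℕ} (DX DY : Fin n → Finset ℕ) (i : Fin n) (v : ℕ) : Prop :=
  ∃ x y, SatLt DX DY x y ∧ x i = v

/-- The value `v` is consistent for the variable `Y i` (strict constraint). -/
def ConsYLt {n : ℕ} (DX DY : Fin n → Finset ℕ) (i : Fin n) (v : ℕ) : Prop :=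
  ∃ x y, SatLt DX DY x y ∧ y i = v

/-- The strict constraint `X <ₘ Y` is generalised arc-consistent. -/
def GACLt {n : ℕ} (DX DY : Fin n → Finset ℕ) : Prop :=
  (∀ i, ∀ v ∈ DX i, ConsXLt DX DY i v) ∧ (∀ i, ∀ v ∈ DY i, ConsYLt DX DY i v)

lemma mmax_mem {s : Multiset ℕ} (h : s ≠ 0) : mmax s ∈ s := by
  induction s using Multiset.induction with
  | empty => simp at h
  | cons a s ih =>
    rcases eq_or_ne s 0 with rfl | hs
    · simp [mmax]
    · have hm := ih hs
      have : mmax (a ::ₘ s) = a ⊔ mmax s := by simp [mmax]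
      rcases le_total a (mmax s) with hle | hle
      · rw [this, sup_eq_right.mpr hle]; exact Multiset.mem_cons_of_mem hm
      · rw [this, sup_eq_left.mpr hle]; exact Multiset.mem_cons_self _ _

lemma le_mmax {s : Multiset ℕ} {a : ℕ} (h : a ∈ s) : a ≤ mmax s :=
  Multiset.le_sup h

def wt (B : ℕ) (s : Multiset ℕ) : ℕ := (s.map (fun e => B ^ e)).sum

lemma wt_lt_pow {B : ℕ} (s : Multiset ℕ) (hB : 1 ≤ B) (hc : s.card < B) :
    wt B s < B ^ (mmax s + 1) := by
  have h1 : wt B s ≤ s.card * B ^ (mmax s) := by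
    have := Multiset.sum_le_card_nsmul (s.map (fun e => B ^ e)) (B ^ mmax s)
      (by
        intro x hx
        obtain ⟨e, he, rfl⟩ := Multiset.mem_map.mp hx
        exact Nat.pow_le_pow_right hB (le_mmax he))
    simpa [wt, Multiset.card_map, smul_eq_mul] using this
  calc wt B s ≤ s.card * B ^ mmax s := h1
    _ < B * B ^ mmax s := by
        exact Nat.mul_lt_mul_of_lt_of_le hc (le_refl _) (Nat.pow_pos hB)
    _ = B ^ (mmax s + 1) := by ring

lemma wt_pos {B : ℕ} {s : Multiset ℕ} (hB : 1 ≤ B) (h : s ≠ 0) : 0 < wt B s := by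
  have := mmax_mem h
  have : B ^ (mmax s) ∈ s.map (fun e => B ^ e) := Multiset.mem_map_of_mem _ this
  have h2 : B ^ (mmax s) ≤ wt B s := Multiset.single_le_sum (by intro x _; exact Nat.zero_le x) _ this
  exact lt_of_lt_of_le (Nat.pow_pos hB) h2

lemma wt_lt_of_MLt {B : ℕ} (hB : 1 ≤ B) {x y : Multiset ℕ} (h : MLt x y)
    (hx : x.card < B) (hy : y.card < B) : wt B x < wt B y := by
  induction h with
  | empty hy0 => simpa [wt] using wt_pos hB hy0
  | maxLt hx0 hy0 hlt =>
    rename_i x' y'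
    have h1 : wt B x' < B ^ (mmax x' + 1) := wt_lt_pow x' hB hx
    have h2 : B ^ (mmax x' + 1) ≤ B ^ (mmax y') := Nat.pow_le_pow_right hB hlt
    have h3 : B ^ (mmax y') ≤ wt B y' :=
      Multiset.single_le_sum (by intro z _; exact Nat.zero_le z) _
        (Multiset.mem_map_of_mem _ (mmax_mem hy0))
    omega
  | maxEq hx0 hy0 heq _ ih =>
    rename_i x' y' _
    have hxe : mmax x' ::ₘ x'.erase (mmax x') = x' := Multiset.cons_erase (mmax_mem hx0)
    have hye : mmax y' ::ₘ y'.erase (mmax y') = y' := Multiset.cons_erase (mmax_mem hy0)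
    have hcx : (x'.erase (mmax x')).card < B := by
      have := Multiset.card_erase_lt_of_mem (mmax_mem hx0)
      omega
    have hcy : (y'.erase (mmax y')).card < B := by
      have := Multiset.card_erase_lt_of_mem (mmax_mem hy0)
      omega
    have := ih hcx hcy
    have e1 : wt B x' = B ^ (mmax x') + wt B (x'.erase (mmax x')) := by
      conv_lhs => rw [← hxe]
      simp [wt]
    have e2 : wt B y' = B ^ (mmax y') + wt B (y'.erase (mmax y')) := by
      conv_lhs => rw [← hye]
      simp [wt]
    have e3 : B ^ mmax x' = B ^ mmax y' := by rw [heq]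
    rw [e1, e2]
    omega

lemma trich : ∀ N x y, Multiset.card x + Multiset.card y ≤ N →
    MLt x y ∨ x = y ∨ MLt y x := by
  intro N
  induction N with
  | zero =>
    intro x y h
    have hx : x = 0 := by
      rw [← Multiset.card_eq_zero]; omega
    have hy : y = 0 := by
      rw [← Multiset.card_eq_zero]; omega
    subst hx; subst hy; right; left; rfl
  | succ N ih =>
    intro x y h
    rcases eq_or_ne x 0 with rfl | hx0
    · rcases eq_or_ne y 0 with rfl | hy0
      · right; left; rfl
      · left; exact MLt.empty hy0
    · rcases eq_or_ne y 0 with rfl | hy0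
      · right; right; exact MLt.empty hx0
      · rcases lt_trichotomy (mmax x) (mmax y) with hlt | heq | hgt
        · left; exact MLt.maxLt hx0 hy0 hlt
        · have hxe := Multiset.cons_erase (mmax_mem hx0)
          have hye := Multiset.cons_erase (mmax_mem hy0)
          have hcx := Multiset.card_erase_lt_of_mem (mmax_mem hx0)
          have hcy := Multiset.card_erase_lt_of_mem (mmax_mem hy0)
          have := ih (x.erase (mmax x)) (y.erase (mmax y)) (by omega)
          rcases this with h1 | h1 | h1
          · left; exact MLt.maxEq hx0 hy0 heq h1
          · right; left
            rw [← hxe, ← hye, h1, heq]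
          · right; right; exact MLt.maxEq hy0 hx0 heq.symm h1
        · right; right; exact MLt.maxLt hy0 hx0 hgt

lemma card_msetOf {n : ℕ} (x : Fin n → ℕ) : (msetOf x).card = n := by
  simp [msetOf]

lemma wt_msetOf {B n : ℕ} (x : Fin n → ℕ) : wt B (msetOf x) = ∑ i, B ^ x i := by
  simp [wt, msetOf, List.map_ofFn, List.sum_ofFn, Function.comp]


/-- The strict constraint `X <ₘ Y` is disentailed iff `¬ (floor(X) <ₘ ceiling(Y))`. -/
theorem stmt7 (n : ℕ) (hn : 1 ≤ n) (DX DY : Fin n → Finset ℕ)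
    (hDX : ∀ i, (DX i).Nonempty) (hDY : ∀ i, (DY i).Nonempty) :
    (¬ ∃ x y, SatLt DX DY x y) ↔
      ¬ MLt (msetOf fun i => (DX i).min' (hDX i)) (msetOf fun i => (DY i).max' (hDY i)) := by
  set B := n + 1 with hBdef
  have hB : 1 ≤ B := by omega
  set fl := (fun i => (DX i).min' (hDX i)) with hfl
  set ce := (fun i => (DY i).max' (hDY i)) with hce
  constructor
  · intro hno hML
    exact hno ⟨fl, ce, fun i => Finset.min'_mem _ _, fun i => Finset.max'_mem _ _, hML⟩
  · rintro hnML ⟨x, y, hx, hy, hxy⟩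
    have h1 : wt B (msetOf fl) ≤ wt B (msetOf x) := by
      rw [wt_msetOf, wt_msetOf]
      exact Finset.sum_le_sum fun i _ =>
        Nat.pow_le_pow_right hB (Finset.min'_le _ _ (hx i))
    have h2 : wt B (msetOf x) < wt B (msetOf y) :=
      wt_lt_of_MLt hB hxy (by rw [card_msetOf]; omega) (by rw [card_msetOf]; omega)
    have h3 : wt B (msetOf y) ≤ wt B (msetOf ce) := by
      rw [wt_msetOf, wt_msetOf]
      exact Finset.sum_le_sum fun i _ =>
        Nat.pow_le_pow_right hB (Finset.le_max' _ _ (hy i))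
    rcases trich (Multiset.card (msetOf fl) + Multiset.card (msetOf ce)) (msetOf fl)
        (msetOf ce) le_rfl with h | h | h
    · exact hnML h
    · rw [h] at h1; omega
    · have := wt_lt_of_MLt hB h (by rw [card_msetOf]; omega) (by rw [card_msetOf]; omega)
      omega


end MsetPaper
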